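/- The singular fiber of the coupled spin-oscillator is covered by the two explicit parametrizations: every point (x,y,z,u,v) with x²+y²+z² = 1, (u²+v²)/2 + z = 1 and ux + vy = 0 is of the form (ρ cos θ̃, ρ sin θ̃, z̃, r cos t, r sin t) with r = √(2(1−z̃)), ρ = √(1−z̃²), t = θ̃ ± π/2, for some z̃ ∈ [−1,1] and θ̃ ∈ ℝ, and conversely every such point satisfies the three equations. -/

import Mathlib

open Real

lemma polar_angle (a b ρ : ℝ) (hρ : 0 < ρ) (h : a ^ 2 + b ^ 2 = ρ ^ 2) :
    ∃ θ : ℝ, a = ρ * Real.cos θ ∧ b = ρ * Real.sin θ := by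
  have hc : (⟨a, b⟩ : ℂ) ≠ 0 := by
    intro h0
    rw [Complex.ext_iff] at h0
    simp at h0
    nlinarith [h0.1, h0.2]
  have habs : ‖(⟨a, b⟩ : ℂ)‖ = ρ := by
    rw [Complex.norm_def, Complex.normSq_mk]
    rw [show a * a + b * b = ρ ^ 2 by nlinarith]
    exact Real.sqrt_sq hρ.le
  refine ⟨Complex.arg ⟨a, b⟩, ?_, ?_⟩
  · have := Complex.cos_arg hc
    rw [habs] at this
    simp at this
    field_simp at this
    linarith [this]
  · have := Complex.sin_arg (⟨a, b⟩ : ℂ)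
    rw [habs] at this
    simp at this
    field_simp at this
    linarith [this]

set_option maxHeartbeats 1000000 in
theorem spin_oscillator_singular_fiber (x y z u v : ℝ) :
    (x ^ 2 + y ^ 2 + z ^ 2 = 1 ∧ (u ^ 2 + v ^ 2) / 2 + z = 1 ∧ u * x + v * y = 0)
      ↔ ∃ ε : ℝ, (ε = 1 ∨ ε = -1) ∧ ∃ z' ∈ Set.Icc (-1 : ℝ) 1, ∃ θ : ℝ,
          x = Real.sqrt (1 - z' ^ 2) * cos θ ∧
          y = Real.sqrt (1 - z' ^ 2) * sin θ ∧
          z = z' ∧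
          u = Real.sqrt (2 * (1 - z')) * cos (θ + ε * π / 2) ∧
          v = Real.sqrt (2 * (1 - z')) * sin (θ + ε * π / 2) := by
  constructor
  · rintro ⟨h1, h2, h3⟩
    have hz1 : z ≤ 1 := by nlinarith [sq_nonneg u, sq_nonneg v]
    have hzm : -1 ≤ z := by nlinarith [sq_nonneg x, sq_nonneg y]
    have hρ2 : x ^ 2 + y ^ 2 = 1 - z ^ 2 := by linarith
    have hr2 : u ^ 2 + v ^ 2 = 2 * (1 - z) := by linarith
    by_cases hz : z = 1
    · subst hz
      have hx : x = 0 := by nlinarith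
      have hy : y = 0 := by nlinarith
      have hu : u = 0 := by nlinarith
      have hv : v = 0 := by nlinarith
      exact ⟨1, Or.inl rfl, 1, ⟨by norm_num, le_refl 1⟩, 0,
        by simp [hx, hy, hu, hv]⟩
    · have hzlt : z < 1 := lt_of_le_of_ne hz1 hz
      set r := Real.sqrt (2 * (1 - z)) with hrdef
      have hrsq : r ^ 2 = 2 * (1 - z) := Real.sq_sqrt (by linarith)
      have hrpos : 0 < r := Real.sqrt_pos.2 (by linarith)
      by_cases hxy : x = 0 ∧ y = 0
      · -- then z = -1
        obtain ⟨hx, hy⟩ := hxy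
        obtain ⟨t, hu, hv⟩ := polar_angle u v r hrpos (by nlinarith)
        refine ⟨1, Or.inl rfl, z, ⟨hzm, hz1⟩, t - π / 2, ?_, ?_, rfl, ?_, ?_⟩
        · have : Real.sqrt (1 - z ^ 2) = 0 := by
            rw [show (1 : ℝ) - z ^ 2 = 0 by nlinarith, Real.sqrt_zero]
          rw [this, hx]; ring
        · have : Real.sqrt (1 - z ^ 2) = 0 := by
            rw [show (1 : ℝ) - z ^ 2 = 0 by nlinarith, Real.sqrt_zero]
          rw [this, hy]; ring
        · rw [show t - π / 2 + 1 * π / 2 = t by ring]; exact hu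
        · rw [show t - π / 2 + 1 * π / 2 = t by ring]; exact hv
      · have hρpos : 0 < x ^ 2 + y ^ 2 := by
          rcases (not_and_or.1 hxy) with h | h
          · positivity
          · positivity
        set ρ := Real.sqrt (1 - z ^ 2) with hρdef
        have hρsq : ρ ^ 2 = 1 - z ^ 2 := Real.sq_sqrt (by nlinarith)
        have hρp : 0 < ρ := Real.sqrt_pos.2 (by nlinarith)
        obtain ⟨θ, hx, hy⟩ := polar_angle x y ρ hρp (by rw [hρsq]; linarith)
        -- c such that u = -c*y, v = c*x
        set c : ℝ := (v * x - u * y) / (x ^ 2 + y ^ 2) with hcdef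
        have hu : u = -c * y := by
          rw [hcdef]
          field_simp
          linear_combination x * h3
        have hv : v = c * x := by
          rw [hcdef]
          field_simp
          linear_combination y * h3
        have hcr2 : (c * ρ) ^ 2 = r ^ 2 := by
          have huv : u ^ 2 + v ^ 2 = c ^ 2 * (x ^ 2 + y ^ 2) := by rw [hu, hv]; ring
          nlinarith
        have hcases : c * ρ = r ∨ c * ρ = -r := by
          have : (c * ρ - r) * (c * ρ + r) = 0 := by nlinarith
          rcases mul_eq_zero.1 this with h | h
          · left; linarith
          · right; linarith
        rcases hcases with hc | hc
        · refine ⟨1, Or.inl rfl, z, ⟨hzm, hz1⟩, θ, hx, hy, rfl, ?_, ?_⟩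
          · rw [show θ + 1 * π / 2 = θ + π / 2 by ring, Real.cos_add,
              Real.cos_pi_div_two, Real.sin_pi_div_two, hu, hy]
            linear_combination (-Real.sin θ) * hc
          · rw [show θ + 1 * π / 2 = θ + π / 2 by ring, Real.sin_add,
              Real.cos_pi_div_two, Real.sin_pi_div_two, hv, hx]
            linear_combination (Real.cos θ) * hc
        · refine ⟨-1, Or.inr rfl, z, ⟨hzm, hz1⟩, θ, hx, hy, rfl, ?_, ?_⟩
          · rw [show θ + -1 * π / 2 = θ - π / 2 by ring, Real.cos_sub,
              Real.cos_pi_div_two, Real.sin_pi_div_two, hu, hy]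
            linear_combination (-Real.sin θ) * hc
          · rw [show θ + -1 * π / 2 = θ - π / 2 by ring, Real.sin_sub,
              Real.cos_pi_div_two, Real.sin_pi_div_two, hv, hx]
            linear_combination (Real.cos θ) * hc
  · rintro ⟨ε, hε, z', ⟨hz1, hz2⟩, θ, hx, hy, hz, hu, hv⟩
    have hs1 : Real.sqrt (1 - z' ^ 2) ^ 2 = 1 - z' ^ 2 := Real.sq_sqrt (by nlinarith)
    have hs2 : Real.sqrt (2 * (1 - z')) ^ 2 = 2 * (1 - z') := Real.sq_sqrt (by nlinarith)
    subst hz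
    rcases hε with rfl | rfl
    · rw [show θ + 1 * π / 2 = θ + π / 2 by ring] at hu hv
      simp only [Real.cos_add, Real.sin_add, Real.cos_pi_div_two, Real.sin_pi_div_two] at hu hv
      refine ⟨?_, ?_, ?_⟩
      · rw [hx, hy]
        linear_combination (Real.cos θ ^ 2 + Real.sin θ ^ 2) * hs1 +
          (1 - z ^ 2) * sin_sq_add_cos_sq θ
      · rw [hu, hv]
        linear_combination ((Real.sin θ ^ 2 + Real.cos θ ^ 2) / 2) * hs2 +
          (1 - z) * sin_sq_add_cos_sq θ
      · rw [hx, hy, hu, hv]; ring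
    · rw [show θ + -1 * π / 2 = θ - π / 2 by ring] at hu hv
      simp only [Real.cos_sub, Real.sin_sub, Real.cos_pi_div_two, Real.sin_pi_div_two] at hu hv
      refine ⟨?_, ?_, ?_⟩
      · rw [hx, hy]
        linear_combination (Real.cos θ ^ 2 + Real.sin θ ^ 2) * hs1 +
          (1 - z ^ 2) * sin_sq_add_cos_sq θ
      · rw [hu, hv]
        linear_combination ((Real.sin θ ^ 2 + Real.cos θ ^ 2) / 2) * hs2 +
          (1 - z) * sin_sq_add_cos_sq θ
      · rw [hx, hy, hu, hv]; ring
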